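/- Let 1 → ℂ* → G → K → 1 be a central extension of a finite abelian group K by ℂ*, whose commutator pairing e: K × K → ℂ* is nondegenerate. Then G is Jordan with Jordan constant exactly √#K: every finite subgroup B̃ of G contains an abelian normal subgroup of index at most √#K, and there exists a finite subgroup of G for which no abelian normal subgroup has smaller index. -/

import Mathlib

set_option linter.unusedSectionVars false

lemma stmt15_finite_chars (M : Type*) [CommGroup M] [Finite M] : Finite (M →* ℂˣ) := by
  have : Fintype M := Fintype.ofFinite M
  have hpos : NeZero (Nat.card M) := ⟨Nat.card_pos.ne'⟩
  have hmem : ∀ f : M →* ℂˣ, ∀ m : M, f m ∈ rootsOfUnity (Nat.card M) ℂ := by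
    intro f m
    rw [mem_rootsOfUnity, ← map_pow, pow_card_eq_one', map_one]
  refine Finite.of_injective
    (fun f : M →* ℂˣ => fun m : M => (⟨f m, hmem f m⟩ : rootsOfUnity (Nat.card M) ℂ)) ?_
  intro f g hfg
  refine MonoidHom.ext fun m => ?_
  simpa [Subtype.ext_iff] using congrFun hfg m

lemma stmt15_dual_card_le (M : Type*) [CommGroup M] [Finite M] :
    Nat.card (M →* ℂˣ) ≤ Nat.card M := by
  have : Fintype M := Fintype.ofFinite M
  have hfin : Finite (M →* ℂˣ) := stmt15_finite_chars M
  have : Fintype (M →* ℂˣ) := Fintype.ofFinite _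
  rw [Nat.card_eq_fintype_card, Nat.card_eq_fintype_card]
  have h2 : Function.Injective
      (fun f : M →* ℂˣ => ((Units.coeHom ℂ).comp f : M →* ℂ)) := by
    intro f g h
    refine MonoidHom.ext fun m => Units.ext ?_
    exact DFunLike.congr_fun h m
  have hind := (linearIndependent_monoidHom M ℂ).comp _ h2
  have hcard := hind.fintype_card_le_finrank
  rwa [Module.finrank_pi] at hcard

section
variable {K : Type*} [CommGroup K] [Finite K] (e : K → K → ℂˣ)

def stmt15_homL (h1 : ∀ a b c : K, e (a*b) c = e a c * e b c) (c : K) : K →* ℂˣ :=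
  MonoidHom.mk' (fun a => e a c) (fun a b => h1 a b c)

def stmt15_homR (h2 : ∀ a b c : K, e a (b*c) = e a b * e a c) (a : K) : K →* ℂˣ :=
  MonoidHom.mk' (fun b => e a b) (fun b c => h2 a b c)

lemma stmt15_skew (h1 : ∀ a b c : K, e (a*b) c = e a c * e b c)
    (h2 : ∀ a b c : K, e a (b*c) = e a b * e a c)
    (h3 : ∀ a : K, e a a = 1) (a b : K) : e a b = (e b a)⁻¹ := by
  have h := h3 (a*b)
  rw [h1 a b (a*b), h2 a a b, h2 b a b, h3 a, h3 b, one_mul, mul_one] at h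
  rw [eq_inv_iff_mul_eq_one]
  exact h

def stmt15_perp (h1 : ∀ a b c : K, e (a*b) c = e a c * e b c) (I : Subgroup K) :
    Subgroup K where
  carrier := {k | ∀ i ∈ I, e k i = 1}
  one_mem' := fun i _ => (stmt15_homL e h1 i).map_one
  mul_mem' := by
    intro a b ha hb i hi
    rw [h1 a b i, ha i hi, hb i hi, one_mul]
  inv_mem' := by
    intro a ha i hi
    have : e a⁻¹ i = (e a i)⁻¹ := (stmt15_homL e h1 i).map_inv a
    rw [this, ha i hi, inv_one]

lemma stmt15_mem_perp (h1 : ∀ a b c : K, e (a*b) c = e a c * e b c) {I : Subgroup K} {k : K} :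
    k ∈ stmt15_perp e h1 I ↔ ∀ i ∈ I, e k i = 1 := Iff.rfl

variable (h1 : ∀ a b c : K, e (a*b) c = e a c * e b c)
variable (h2 : ∀ a b c : K, e a (b*c) = e a b * e a c)
variable (h3 : ∀ a : K, e a a = 1)
include h1 h2 h3

/-- Core counting lemma A. -/
lemma stmt15_coreA (H I : Subgroup K) :
    Nat.card H ≤ Nat.card (H ⊓ stmt15_perp e h1 I : Subgroup K) * Nat.card I := by
  classical
  set P := stmt15_perp e h1 I
  -- the pairing map
  let F : ↥H → (↥I →* ℂˣ) := fun h => MonoidHom.mk' (fun i : ↥I => e h i)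
      (fun i j => by simpa using h2 (h : K) i j)
  have hΦmul : ∀ a b : ↥H, F (a*b) = F a * F b := by
    intro a b
    refine MonoidHom.ext fun i => ?_
    simpa [F] using h1 a b i
  set Φ : ↥H →* (↥I →* ℂˣ) := MonoidHom.mk' F hΦmul with hΦ
  have hker : Φ.ker = (H ⊓ P).subgroupOf H := by
    ext x
    simp only [MonoidHom.mem_ker, Subgroup.mem_subgroupOf, Subgroup.mem_inf]
    constructor
    · intro hx
      refine ⟨x.2, ?_⟩
      intro i hi
      have := DFunLike.congr_fun hx (⟨i, hi⟩ : ↥I)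
      simpa [hΦ, F] using this
    · intro hx
      refine MonoidHom.ext fun i => ?_
      simpa [hΦ, F] using hx.2 i i.2
  have hfin : Finite (↥I →* ℂˣ) := stmt15_finite_chars _
  have hcard := Subgroup.card_eq_card_quotient_mul_card_subgroup Φ.ker
  have hq : Nat.card (↥H ⧸ Φ.ker) = Nat.card Φ.range :=
    Nat.card_congr (QuotientGroup.quotientKerEquivRange Φ).toEquiv
  have hr : Nat.card Φ.range ≤ Nat.card (↥I →* ℂˣ) :=
    Nat.card_le_card_of_injective _ Subtype.val_injective
  have hd : Nat.card (↥I →* ℂˣ) ≤ Nat.card I := stmt15_dual_card_le _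
  have hk : Nat.card Φ.ker = Nat.card (H ⊓ P : Subgroup K) := by
    rw [hker]
    exact Nat.card_congr (Subgroup.subgroupOfEquivOfLe inf_le_left).toEquiv
  calc Nat.card H = Nat.card (↥H ⧸ Φ.ker) * Nat.card Φ.ker := hcard
    _ = Nat.card Φ.range * Nat.card (H ⊓ P : Subgroup K) := by rw [hq, hk]
    _ ≤ Nat.card I * Nat.card (H ⊓ P : Subgroup K) :=
        Nat.mul_le_mul_right _ (hr.trans hd)
    _ = Nat.card (H ⊓ P : Subgroup K) * Nat.card I := Nat.mul_comm _ _

/-- Core counting lemma B, using nondegeneracy. -/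
lemma stmt15_coreB (hnd : ∀ k : K, (∀ k' : K, e k k' = 1) → k = 1) (I : Subgroup K) :
    Nat.card (stmt15_perp e h1 I) * Nat.card I ≤ Nat.card K := by
  set P := stmt15_perp e h1 I
  have hlift : ∀ x : ↥P, ∀ i ∈ I, stmt15_homR e h2 (x : K) i = 1 := by
    intro x i hi
    exact x.2 i hi
  set Ψ : ↥P → (K ⧸ I →* ℂˣ) :=
    fun x => QuotientGroup.lift I (stmt15_homR e h2 (x : K)) (hlift x) with hΨ
  have hinj : Function.Injective Ψ := by
    intro x y hxy
    have hev : ∀ k : K, e (x : K) k = e (y : K) k := by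
      intro k
      have := DFunLike.congr_fun hxy (QuotientGroup.mk k)
      simpa [hΨ, stmt15_homR] using this
    have : (x : K) * (y : K)⁻¹ = 1 := by
      apply hnd
      intro k'
      rw [h1, hev k']
      have : e ((y : K))⁻¹ k' = (e (y : K) k')⁻¹ := (stmt15_homL e h1 k').map_inv _
      rw [this, mul_inv_cancel]
    exact Subtype.ext (by rwa [mul_inv_eq_one] at this)
  have hfin : Finite (K ⧸ I →* ℂˣ) := stmt15_finite_chars _
  have h1' : Nat.card P ≤ Nat.card (K ⧸ I →* ℂˣ) := Nat.card_le_card_of_injective Ψ hinj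
  have h2' : Nat.card (K ⧸ I →* ℂˣ) ≤ Nat.card (K ⧸ I) := stmt15_dual_card_le _
  have h3' := (Subgroup.card_eq_card_quotient_mul_card_subgroup I).symm
  calc Nat.card P * Nat.card I ≤ Nat.card (K ⧸ I) * Nat.card I :=
        Nat.mul_le_mul_right _ (h1'.trans h2')
    _ = Nat.card K := h3'

/-- Isotropic subgroups have order at most √#K. -/
lemma stmt15_iso_sq_le (hnd : ∀ k : K, (∀ k' : K, e k k' = 1) → k = 1) (I : Subgroup K)
    (hiso : ∀ x ∈ I, ∀ y ∈ I, e x y = 1) :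
    Nat.card I * Nat.card I ≤ Nat.card K := by
  have hle : I ≤ stmt15_perp e h1 I := fun x hx i hi => hiso x hx i hi
  have := stmt15_coreB e h1 h2 h3 hnd I
  exact le_trans (Nat.mul_le_mul_right _ (Subgroup.card_le_of_le hle)) this

/-- Enlarging an isotropic subgroup by a perp vector. -/
lemma stmt15_iso_sup (L : Subgroup K) (hiso : ∀ x ∈ L, ∀ y ∈ L, e x y = 1)
    {x : K} (hx : x ∈ stmt15_perp e h1 L) :
    ∀ a ∈ L ⊔ Subgroup.zpowers x, ∀ b ∈ L ⊔ Subgroup.zpowers x, e a b = 1 := by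
  intro a ha b hb
  obtain ⟨l₁, hl₁, z₁, hz₁, rfl⟩ := Subgroup.mem_sup.mp ha
  obtain ⟨l₂, hl₂, z₂, hz₂, rfl⟩ := Subgroup.mem_sup.mp hb
  obtain ⟨m, rfl⟩ := Subgroup.mem_zpowers_iff.mp hz₁
  obtain ⟨n, rfl⟩ := Subgroup.mem_zpowers_iff.mp hz₂
  have exl₁ : e x l₁ = 1 := hx l₁ hl₁
  have exl₂ : e x l₂ = 1 := hx l₂ hl₂
  have el₁x : e l₁ x = 1 := by rw [stmt15_skew e h1 h2 h3, exl₁, inv_one]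
  have hpowR : ∀ a k : K, ∀ j : ℤ, e a (k ^ j) = (e a k) ^ j :=
    fun a k j => (stmt15_homR e h2 a).map_zpow k j
  have hpowL : ∀ a k : K, ∀ j : ℤ, e (k ^ j) a = (e k a) ^ j :=
    fun a k j => (stmt15_homL e h1 a).map_zpow k j
  rw [h1, h2, h2, hpowR l₁ x n, el₁x, hpowL, hpowL, hpowR, exl₂, h3,
    hiso l₁ hl₁ l₂ hl₂]
  simp
/-- Choice of an isotropic subgroup of maximal cardinality inside `H`. -/
lemma stmt15_exists_max_iso (H : Subgroup K) :
    ∃ L : Subgroup K, (∀ x ∈ L, ∀ y ∈ L, e x y = 1) ∧ L ≤ H ∧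
      (∀ J : Subgroup K, (∀ x ∈ J, ∀ y ∈ J, e x y = 1) → J ≤ H →
        Nat.card J ≤ Nat.card L) := by
  classical
  have : Finite (Subgroup K) :=
    Finite.of_injective (fun (J : Subgroup K) => (J : Set K)) SetLike.coe_injective
  obtain ⟨L, hL⟩ := Finite.exists_max (fun J : Subgroup K =>
    if (∀ x ∈ J, ∀ y ∈ J, e x y = 1) ∧ J ≤ H then Nat.card J else 0)
  have hbot : (∀ x ∈ (⊥ : Subgroup K), ∀ y ∈ (⊥ : Subgroup K), e x y = 1) ∧
      (⊥ : Subgroup K) ≤ H := by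
    refine ⟨?_, bot_le⟩
    intro x hx y hy
    rw [Subgroup.mem_bot] at hx hy
    subst hx; subst hy
    exact h3 1
  have hble := hL ⊥
  rw [if_pos hbot] at hble
  have hcardbot : (0 : ℕ) < Nat.card (⊥ : Subgroup K) := Nat.card_pos
  have hLpred : (∀ x ∈ L, ∀ y ∈ L, e x y = 1) ∧ L ≤ H := by
    by_contra hcon
    rw [if_neg hcon] at hble
    omega
  refine ⟨L, hLpred.1, hLpred.2, ?_⟩
  intro J hJiso hJH
  have := hL J
  rw [if_pos ⟨hJiso, hJH⟩, if_pos hLpred] at this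
  exact this

/-- A maximal isotropic subgroup of `H` equals its perp intersected with `H`. -/
lemma stmt15_max_iso_perp (H L : Subgroup K) (hiso : ∀ x ∈ L, ∀ y ∈ L, e x y = 1)
    (hLH : L ≤ H)
    (hmax : ∀ J : Subgroup K, (∀ x ∈ J, ∀ y ∈ J, e x y = 1) → J ≤ H →
      Nat.card J ≤ Nat.card L) :
    H ⊓ stmt15_perp e h1 L = L := by
  refine le_antisymm ?_ (le_inf hLH (fun x hx i hi => hiso x hx i hi))
  intro x hx
  obtain ⟨hxH, hxP⟩ := Subgroup.mem_inf.mp hx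
  set J := L ⊔ Subgroup.zpowers x with hJ
  have hJiso : ∀ a ∈ J, ∀ b ∈ J, e a b = 1 := stmt15_iso_sup e h1 h2 h3 L hiso hxP
  have hJH : J ≤ H := sup_le hLH (Subgroup.zpowers_le.mpr hxH)
  have hcard : Nat.card J ≤ Nat.card L := hmax J hJiso hJH
  have hLJ : L ≤ J := le_sup_left
  have : (L : Set K) = (J : Set K) := by
    refine Set.eq_of_subset_of_ncard_le hLJ ?_ (Set.toFinite _)
    rwa [← Nat.card_coe_set_eq, ← Nat.card_coe_set_eq]
  have hLJ' : L = J := SetLike.coe_injective this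
  rw [hLJ']
  exact le_sup_right (α := Subgroup K) (Subgroup.mem_zpowers x)
end
/-- Let `1 → ℂ* → G → K → 1` be a central extension of a finite abelian group `K` by
`ℂ*` whose commutator pairing `e : K × K → ℂ*` is nondegenerate.  Then `G` is Jordan
with Jordan constant exactly `m = √#K`: every finite subgroup `B` of `G` contains an
abelian normal subgroup of index at most `m`, and there is a finite subgroup of `G`
for which no abelian normal subgroup has index smaller than `m`. -/
theorem stmt15 {G K : Type*} [Group G] [CommGroup K] [Finite K]
    (ι : ℂˣ →* G) (hι : Function.Injective ι)
    (hcent : ∀ c : ℂˣ, ι c ∈ Subgroup.center G)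
    (κ : G →* K) (hκ : Function.Surjective κ)
    (hker : κ.ker = ι.range)
    (e : K → K → ℂˣ)
    (he : ∀ g₁ g₂ : G, ι (e (κ g₁) (κ g₂)) = g₁ * g₂ * g₁⁻¹ * g₂⁻¹)
    (hnd : ∀ k : K, (∀ k' : K, e k k' = 1) → k = 1) :
    ∃ m : ℕ, Nat.card K = m ^ 2 ∧
      (∀ B : Subgroup G, (B : Set G).Finite →
        ∃ A : Subgroup G, A ≤ B ∧ (A.subgroupOf B).Normal ∧
          (∀ x ∈ A, ∀ y ∈ A, x * y = y * x) ∧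
          Nat.card B ≤ m * Nat.card A) ∧
      (∃ B : Subgroup G, (B : Set G).Finite ∧
        ∀ A : Subgroup G, A ≤ B → (A.subgroupOf B).Normal →
          (∀ x ∈ A, ∀ y ∈ A, x * y = y * x) →
          m * Nat.card A ≤ Nat.card B) := by
  classical
  have hcomm : ∀ (u : ℂˣ) (g : G), g * ι u = ι u * g :=
    fun u g => Subgroup.mem_center_iff.mp (hcent u) g
  -- basic properties of the pairing
  have h3 : ∀ a : K, e a a = 1 := by
    intro a
    obtain ⟨g, rfl⟩ := hκ a
    apply hι
    rw [he g g, map_one]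
    group
  have hskew : ∀ a b : K, e a b = (e b a)⁻¹ := by
    intro a b
    rw [eq_inv_iff_mul_eq_one]
    obtain ⟨g, rfl⟩ := hκ a
    obtain ⟨g', rfl⟩ := hκ b
    apply hι
    rw [map_mul, he g g', he g' g, map_one]
    group
  have h1 : ∀ a b c : K, e (a*b) c = e a c * e b c := by
    intro a b c
    obtain ⟨ga, rfl⟩ := hκ a
    obtain ⟨gb, rfl⟩ := hκ b
    obtain ⟨gc, rfl⟩ := hκ c
    apply hι
    rw [map_mul, ← map_mul κ ga gb, he (ga*gb) gc, he ga gc, he gb gc]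
    -- central commutator manipulation
    have hu : gb * gc = (ι (e (κ gb) (κ gc))) * (gc * gb) := by
      rw [he gb gc]; group
    calc ga * gb * gc * (ga * gb)⁻¹ * gc⁻¹
        = ga * (gb * gc) * (gb⁻¹ * ga⁻¹) * gc⁻¹ := by group
      _ = ga * ((ι (e (κ gb) (κ gc))) * (gc * gb)) * (gb⁻¹ * ga⁻¹) * gc⁻¹ := by rw [← hu]
      _ = (ga * ι (e (κ gb) (κ gc))) * (gc * (gb * gb⁻¹) * ga⁻¹ * gc⁻¹) := by group
      _ = (ι (e (κ gb) (κ gc)) * ga) * (gc * (gb * gb⁻¹) * ga⁻¹ * gc⁻¹) := by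
          rw [hcomm (e (κ gb) (κ gc)) ga]
      _ = ι (e (κ gb) (κ gc)) * (ga * gc * ga⁻¹ * gc⁻¹) := by group
      _ = ga * gc * ga⁻¹ * gc⁻¹ * ι (e (κ gb) (κ gc)) := (hcomm _ _).symm
      _ = ga * gc * ga⁻¹ * gc⁻¹ * (gb * gc * gb⁻¹ * gc⁻¹) := by rw [he gb gc]
  have h2 : ∀ a b c : K, e a (b*c) = e a b * e a c := by
    intro a b c
    rw [hskew a (b*c), h1 b c a, mul_inv, ← hskew a b, ← hskew a c, mul_comm]
  have hικ : ∀ z : ℂˣ, κ (ι z) = 1 := by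
    intro z
    have : ι z ∈ κ.ker := by rw [hker]; exact ⟨z, rfl⟩
    exact this
  -- the maximal isotropic subgroup of K
  obtain ⟨L₀, hL₀iso, _, hL₀max⟩ := stmt15_exists_max_iso e h1 h2 h3 (⊤ : Subgroup K)
  set m := Nat.card L₀ with hm
  have hperp₀ : (⊤ : Subgroup K) ⊓ stmt15_perp e h1 L₀ = L₀ :=
    stmt15_max_iso_perp e h1 h2 h3 ⊤ L₀ hL₀iso le_top hL₀max
  have hKm : Nat.card K = m ^ 2 := by
    have hle : Nat.card K ≤ m * m := by
      have := stmt15_coreA e h1 h2 h3 (⊤ : Subgroup K) L₀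
      rwa [hperp₀, Subgroup.card_top] at this
    have hge : m * m ≤ Nat.card K := stmt15_iso_sq_le e h1 h2 h3 hnd L₀ hL₀iso
    rw [pow_two]
    omega
  -- any isotropic subgroup has cardinality at most m
  have hiso_le : ∀ I : Subgroup K, (∀ x ∈ I, ∀ y ∈ I, e x y = 1) → Nat.card I ≤ m := by
    intro I hiso
    have h := stmt15_iso_sq_le e h1 h2 h3 hnd I hiso
    rw [hKm, pow_two] at h
    by_contra hcon
    push_neg at hcon
    have := Nat.mul_lt_mul_of_lt_of_le hcon (le_of_lt hcon) (by omega)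
    omega
  refine ⟨m, hKm, ?_, ?_⟩
  · -- upper bound: every finite subgroup has a large abelian normal subgroup
    intro B hBfin
    have hBfin' : Finite ↥B := hBfin.to_subtype
    set H := B.map κ with hH
    obtain ⟨L, hLiso, hLH, hLmax⟩ := stmt15_exists_max_iso e h1 h2 h3 H
    have hperp : H ⊓ stmt15_perp e h1 L = L :=
      stmt15_max_iso_perp e h1 h2 h3 H L hLiso hLH hLmax
    set A := B ⊓ L.comap κ with hA
    have hAB : A ≤ B := inf_le_left
    refine ⟨A, hAB, ?_, ?_, ?_⟩
    · -- normality
      constructor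
      intro n hn g
      rw [Subgroup.mem_subgroupOf] at hn ⊢
      obtain ⟨-, hn2⟩ := Subgroup.mem_inf.mp hn
      refine Subgroup.mem_inf.mpr ⟨?_, ?_⟩
      · exact (g * n * g⁻¹ : ↥B).2
      · rw [Subgroup.mem_comap] at hn2 ⊢
        have : κ ((g * n * g⁻¹ : ↥B) : G) = κ (n : G) := by
          push_cast
          rw [map_mul, map_mul, map_inv, mul_comm (κ (g:G)) (κ (n:G)), mul_assoc,
            mul_inv_cancel, mul_one]
        rwa [this]
    · -- abelian
      intro x hx y hy
      obtain ⟨-, hx2⟩ := Subgroup.mem_inf.mp hx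
      obtain ⟨-, hy2⟩ := Subgroup.mem_inf.mp hy
      rw [Subgroup.mem_comap] at hx2 hy2
      have h0 : x * y * x⁻¹ * y⁻¹ = 1 := by
        rw [← he x y, hLiso _ hx2 _ hy2, map_one]
      have h0' : x * y * x⁻¹ = y := mul_inv_eq_one.mp h0
      calc x * y = (x * y * x⁻¹) * x := by group
        _ = y * x := by rw [h0']
    · -- cardinality
      set f : ↥B →* K ⧸ L := ((QuotientGroup.mk' L).comp κ).comp B.subtype with hf
      have hkerf : f.ker = A.subgroupOf B := by
        ext x
        rw [MonoidHom.mem_ker, Subgroup.mem_subgroupOf]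
        have : f x = QuotientGroup.mk' L (κ (x : G)) := rfl
        rw [this, ← MonoidHom.mem_ker, QuotientGroup.ker_mk']
        constructor
        · intro hx
          exact Subgroup.mem_inf.mpr ⟨x.2, Subgroup.mem_comap.mpr hx⟩
        · intro hx
          exact Subgroup.mem_comap.mp (Subgroup.mem_inf.mp hx).2
      have hcard1 : Nat.card ↥B = Nat.card f.range * Nat.card f.ker := by
        rw [Subgroup.card_eq_card_quotient_mul_card_subgroup f.ker]
        congr 1
        exact Nat.card_congr (QuotientGroup.quotientKerEquivRange f).toEquiv
      have hkerA : Nat.card f.ker = Nat.card ↥A := by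
        rw [hkerf]
        exact Nat.card_congr (Subgroup.subgroupOfEquivOfLe hAB).toEquiv
      have hrangef : f.range = H.map (QuotientGroup.mk' L) := by
        rw [hf, MonoidHom.range_comp, Subgroup.range_subtype, hH, Subgroup.map_map]
      -- the range of f has cardinality at most m
      have hLB : Nat.card (H.map (QuotientGroup.mk' L)) * Nat.card L = Nat.card H := by
        set g2 : ↥H →* K ⧸ L := (QuotientGroup.mk' L).comp H.subtype with hg2
        have hker2 : g2.ker = L.subgroupOf H := by
          ext x
          rw [MonoidHom.mem_ker, Subgroup.mem_subgroupOf]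
          have : g2 x = QuotientGroup.mk' L (x : K) := rfl
          rw [this, ← MonoidHom.mem_ker, QuotientGroup.ker_mk']
        have hrange2 : g2.range = H.map (QuotientGroup.mk' L) := by
          rw [hg2, MonoidHom.range_comp, Subgroup.range_subtype]
        have := Subgroup.card_eq_card_quotient_mul_card_subgroup g2.ker
        rw [hker2] at this
        rw [← hrange2]
        rw [Nat.card_congr (Subgroup.subgroupOfEquivOfLe hLH).toEquiv] at this
        rw [this]
        congr 1
        rw [← hker2]
        exact (Nat.card_congr (QuotientGroup.quotientKerEquivRange g2).toEquiv).symm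
      have hHL : Nat.card H ≤ Nat.card L * Nat.card L := by
        have := stmt15_coreA e h1 h2 h3 H L
        rwa [hperp] at this
      have hLpos : 0 < Nat.card L := Nat.card_pos
      have hrle : Nat.card (H.map (QuotientGroup.mk' L)) ≤ Nat.card L := by
        have := hLB.trans_le hHL
        exact Nat.le_of_mul_le_mul_right this hLpos
      have hLm : Nat.card L ≤ m := hL₀max L hLiso le_top
      calc Nat.card ↥B = Nat.card f.range * Nat.card ↥A := by rw [hcard1, hkerA]
        _ ≤ m * Nat.card ↥A := by
            refine Nat.mul_le_mul_right _ ?_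
            rw [hrangef]
            exact hrle.trans hLm
  · -- lower bound witness
    have hKfin : Fintype K := Fintype.ofFinite K
    set N := Fintype.card K with hNdef
    have hNpos : 0 < N := Fintype.card_pos
    have hNZ : NeZero N := ⟨hNpos.ne'⟩
    set s₀ : K → G := Function.surjInv hκ with hs₀def
    have hs₀ : ∀ k, κ (s₀ k) = k := fun k => Function.surjInv_eq hκ k
    have hc_ex : ∀ k k' : K, ∃ z : ℂˣ, ι z = s₀ k * s₀ k' * (s₀ (k*k'))⁻¹ := by
      intro k k'
      have hmem : s₀ k * s₀ k' * (s₀ (k*k'))⁻¹ ∈ κ.ker := by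
        rw [MonoidHom.mem_ker, map_mul, map_mul, map_inv, hs₀, hs₀, hs₀, mul_inv_cancel]
      rw [hker] at hmem
      exact hmem
    choose c hc using hc_ex
    have hc' : ∀ k k' : K, s₀ k * s₀ k' = ι (c k k') * s₀ (k*k') := by
      intro k k'
      rw [hc k k']
      group
    have hco : ∀ a b d : K, c a b * c (a*b) d = c b d * c a (b*d) := by
      intro a b d
      apply hι
      have l1 : (s₀ a * s₀ b) * s₀ d = ι (c a b * c (a*b) d) * s₀ (a*b*d) := by
        rw [map_mul, hc' a b, mul_assoc (ι (c a b)), hc' (a*b) d, ← mul_assoc]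
      have l2 : s₀ a * (s₀ b * s₀ d) = ι (c b d * c a (b*d)) * s₀ (a*b*d) := by
        rw [map_mul, hc' b d, ← mul_assoc (s₀ a), hcomm (c b d) (s₀ a),
          mul_assoc (ι (c b d)), hc' a (b*d), ← mul_assoc, ← mul_assoc a b d]
      have l3 := l1.symm.trans ((mul_assoc _ _ _).trans l2)
      exact mul_right_cancel l3
    set bb : K → ℂˣ := fun k => ∏ d : K, c k d with hbb
    have hpow : ∀ a b : K, (c a b)^N * bb (a*b) = bb b * bb a := by
      intro a b
      have step : ∏ d : K, (c a b * c (a*b) d) = ∏ d : K, (c b d * c a (b*d)) :=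
        Finset.prod_congr rfl (fun d _ => hco a b d)
      rw [Finset.prod_mul_distrib, Finset.prod_mul_distrib, Finset.prod_const,
        Finset.card_univ] at step
      have hre : ∏ d : K, c a (b*d) = ∏ d : K, c a d :=
        Fintype.prod_equiv (Equiv.mulLeft b) _ _ (fun d => rfl)
      rw [hre] at step
      simp only [hbb]
      exact step
    have hβ_ex : ∀ k : K, ∃ z : ℂˣ, z ^ N = bb k := by
      intro k
      obtain ⟨w, hw⟩ := IsAlgClosed.exists_pow_nat_eq ((bb k : ℂˣ) : ℂ) hNpos
      have hw0 : w ≠ 0 := by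
        intro h0
        rw [h0, zero_pow hNpos.ne'] at hw
        exact (Units.ne_zero _) hw.symm
      refine ⟨Units.mk0 w hw0, Units.ext ?_⟩
      simpa using hw
    choose β hβ using hβ_ex
    set t : K → G := fun k => ι ((β k)⁻¹) * s₀ k with htdef
    set c' : K → K → ℂˣ := fun a b => (β a)⁻¹ * (β b)⁻¹ * c a b * β (a*b) with hcpdef
    have hκt : ∀ k, κ (t k) = k := by
      intro k
      simp only [htdef]
      rw [map_mul, hικ, one_mul, hs₀]
    have htmul : ∀ a b : K, t a * t b = ι (c' a b) * t (a*b) := by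
      intro a b
      have key : (β a)⁻¹ * (β b)⁻¹ * c a b = c' a b * (β (a*b))⁻¹ := by
        simp only [hcpdef]
        rw [mul_inv_cancel_right]
      calc t a * t b = ι ((β a)⁻¹) * (s₀ a * ι ((β b)⁻¹)) * s₀ b := by
            simp only [htdef]; group
        _ = ι ((β a)⁻¹) * (ι ((β b)⁻¹) * s₀ a) * s₀ b := by
            rw [hcomm ((β b)⁻¹) (s₀ a)]
        _ = (ι ((β a)⁻¹) * ι ((β b)⁻¹)) * (s₀ a * s₀ b) := by group
        _ = (ι ((β a)⁻¹) * ι ((β b)⁻¹)) * (ι (c a b) * s₀ (a*b)) := by rw [hc' a b]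
        _ = ι ((β a)⁻¹ * (β b)⁻¹ * c a b) * s₀ (a*b) := by
            rw [map_mul, map_mul]; group
        _ = ι (c' a b * (β (a*b))⁻¹) * s₀ (a*b) := by rw [key]
        _ = ι (c' a b) * (ι ((β (a*b))⁻¹) * s₀ (a*b)) := by rw [map_mul]; group
        _ = ι (c' a b) * t (a*b) := by simp only [htdef]
    have hc'N : ∀ a b : K, (c' a b)^N = 1 := by
      intro a b
      have expand : (c' a b)^N = ((bb a)⁻¹ * (bb b)⁻¹) * ((c a b)^N * bb (a*b)) := by
        simp only [hcpdef]
        rw [mul_pow, mul_pow, mul_pow, inv_pow, inv_pow, hβ a, hβ b, hβ (a*b), mul_assoc]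
      rw [expand, hpow a b]
      group
    have ht1 : t 1 = ι (c' 1 1) := by
      have h := htmul 1 1
      rw [one_mul] at h
      exact mul_right_cancel h
    set Bgrp : Subgroup G :=
      { carrier := {g : G | ∃ z : ℂˣ, z ^ N = 1 ∧ ∃ k : K, g = ι z * t k}
        one_mem' := by
          refine ⟨(c' 1 1)⁻¹, by rw [inv_pow, hc'N, inv_one], 1, ?_⟩
          rw [ht1, ← map_mul, inv_mul_cancel, map_one]
        mul_mem' := by
          rintro a b ⟨z₁, hz₁, k₁, rfl⟩ ⟨z₂, hz₂, k₂, rfl⟩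
          refine ⟨z₁ * z₂ * c' k₁ k₂, by simp [mul_pow, hz₁, hz₂, hc'N], k₁ * k₂, ?_⟩
          calc ι z₁ * t k₁ * (ι z₂ * t k₂)
              = ι z₁ * (t k₁ * ι z₂) * t k₂ := by group
            _ = ι z₁ * (ι z₂ * t k₁) * t k₂ := by rw [hcomm z₂ (t k₁)]
            _ = (ι z₁ * ι z₂) * (t k₁ * t k₂) := by group
            _ = (ι z₁ * ι z₂) * (ι (c' k₁ k₂) * t (k₁ * k₂)) := by rw [htmul k₁ k₂]
            _ = ι (z₁ * z₂ * c' k₁ k₂) * t (k₁ * k₂) := by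
                rw [map_mul ι (z₁ * z₂) (c' k₁ k₂), map_mul ι z₁ z₂]
                group
        inv_mem' := by
          rintro a ⟨z, hz, k, rfl⟩
          refine ⟨z⁻¹ * (c' k k⁻¹ * c' 1 1)⁻¹, by
            simp [mul_pow, inv_pow, hz, hc'N], k⁻¹, ?_⟩
          have hprod : (ι z * t k) * (ι (z⁻¹ * (c' k k⁻¹ * c' 1 1)⁻¹) * t k⁻¹) = 1 := by
            calc (ι z * t k) * (ι (z⁻¹ * (c' k k⁻¹ * c' 1 1)⁻¹) * t k⁻¹)
                = ι z * (t k * ι (z⁻¹ * (c' k k⁻¹ * c' 1 1)⁻¹)) * t k⁻¹ := by group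
              _ = ι z * (ι (z⁻¹ * (c' k k⁻¹ * c' 1 1)⁻¹) * t k) * t k⁻¹ := by
                  rw [hcomm (z⁻¹ * (c' k k⁻¹ * c' 1 1)⁻¹) (t k)]
              _ = (ι z * ι (z⁻¹ * (c' k k⁻¹ * c' 1 1)⁻¹)) * (t k * t k⁻¹) := by group
              _ = (ι z * ι (z⁻¹ * (c' k k⁻¹ * c' 1 1)⁻¹)) * (ι (c' k k⁻¹) * t (k * k⁻¹)) := by
                  rw [htmul k k⁻¹]
              _ = (ι z * ι (z⁻¹ * (c' k k⁻¹ * c' 1 1)⁻¹)) * (ι (c' k k⁻¹) * ι (c' 1 1)) := by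
                  rw [mul_inv_cancel, ht1]
              _ = ι (z * (z⁻¹ * (c' k k⁻¹ * c' 1 1)⁻¹) * (c' k k⁻¹ * c' 1 1)) := by
                  rw [map_mul ι (z * (z⁻¹ * (c' k k⁻¹ * c' 1 1)⁻¹)) (c' k k⁻¹ * c' 1 1),
                    map_mul ι z (z⁻¹ * (c' k k⁻¹ * c' 1 1)⁻¹),
                    map_mul ι (c' k k⁻¹) (c' 1 1)]
              _ = ι 1 := by
                  congr 1
                  group
              _ = 1 := map_one ι
          rw [inv_eq_of_mul_eq_one_right hprod] }
      with hBgrpdef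
    have hmemB : ∀ g : G, g ∈ Bgrp ↔ ∃ z : ℂˣ, z ^ N = 1 ∧ ∃ k : K, g = ι z * t k :=
      fun g => Iff.rfl
    have hBsetfin : (Bgrp : Set G).Finite := by
      have hsub : (Bgrp : Set G) ⊆
          (fun p : (rootsOfUnity N ℂ) × K => ι (p.1 : ℂˣ) * t p.2) '' Set.univ := by
        rintro g ⟨z, hz, k, rfl⟩
        exact ⟨⟨⟨z, (mem_rootsOfUnity N z).mpr hz⟩, k⟩, Set.mem_univ _, rfl⟩
      exact (Set.finite_univ.image _).subset hsub
    have hBfinite : Finite ↥Bgrp := hBsetfin.to_subtype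
    refine ⟨Bgrp, hBsetfin, ?_⟩
    intro A hABgrp _ habel
    set M := Nat.card (rootsOfUnity N ℂ) with hM
    set f : ↥A →* K := κ.comp A.subtype with hf
    have hAfin : Finite ↥A := Finite.of_injective _ (Subgroup.inclusion_injective hABgrp)
    have hA1 : Nat.card ↥A = Nat.card f.range * Nat.card f.ker := by
      rw [Subgroup.card_eq_card_quotient_mul_card_subgroup f.ker]
      congr 1
      exact Nat.card_congr (QuotientGroup.quotientKerEquivRange f).toEquiv
    -- kernel bound
    have hker_map : ∀ x : f.ker, ∃ w : rootsOfUnity N ℂ, ι (w : ℂˣ) = ((x : ↥A) : G) := by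
      intro x
      have hxB : ((x : ↥A) : G) ∈ Bgrp := hABgrp (x : ↥A).2
      obtain ⟨z, hz, k, hxk⟩ := hxB
      have hx0 : κ ((x : ↥A) : G) = 1 := x.2
      rw [hxk, map_mul, hικ, one_mul, hκt] at hx0
      subst hx0
      refine ⟨⟨z * c' 1 1, ?_⟩, ?_⟩
      · rw [mem_rootsOfUnity, mul_pow, hz, hc'N, one_mul]
      · rw [hxk, ht1, ← map_mul]
    choose w hw using hker_map
    have hwinj : Function.Injective w := by
      intro x y hxy
      have : ((x : ↥A) : G) = ((y : ↥A) : G) := by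
        rw [← hw x, ← hw y, hxy]
      exact Subtype.ext (Subtype.ext this)
    have hkerle : Nat.card f.ker ≤ M := Nat.card_le_card_of_injective w hwinj
    -- range bound
    have hriso : ∀ x ∈ f.range, ∀ y ∈ f.range, e x y = 1 := by
      rintro x ⟨a, rfl⟩ y ⟨b, rfl⟩
      apply hι
      rw [map_one]
      show ι (e (κ ((a : ↥A) : G)) (κ ((b : ↥A) : G))) = 1
      have hab : ((a : ↥A) : G) * ((b : ↥A) : G) = ((b : ↥A) : G) * ((a : ↥A) : G) :=
        habel _ (a : ↥A).2 _ (b : ↥A).2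
      rw [he, hab]
      group
    have hrangele : Nat.card f.range ≤ m := hiso_le f.range hriso
    -- B is big
    have hBinj_ex : ∀ p : (rootsOfUnity N ℂ) × K, ι (p.1 : ℂˣ) * t p.2 ∈ Bgrp :=
      fun p => ⟨p.1, (mem_rootsOfUnity N (p.1 : ℂˣ)).mp p.1.2, p.2, rfl⟩
    have hBinj : Function.Injective
        (fun p : (rootsOfUnity N ℂ) × K => (⟨ι (p.1 : ℂˣ) * t p.2, hBinj_ex p⟩ : ↥Bgrp)) := by
      intro p q hpq
      have hco : ι (p.1 : ℂˣ) * t p.2 = ι (q.1 : ℂˣ) * t q.2 := congrArg Subtype.val hpq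
      have hk : p.2 = q.2 := by
        have := congrArg κ hco
        rwa [map_mul κ (ι (p.1 : ℂˣ)) (t p.2), map_mul κ (ι (q.1 : ℂˣ)) (t q.2),
          hικ, hικ, one_mul, one_mul, hκt p.2, hκt q.2] at this
      rw [hk] at hco
      have hz : (p.1 : ℂˣ) = (q.1 : ℂˣ) := hι (mul_right_cancel hco)
      exact Prod.ext (Subtype.ext hz) hk
    have hBbig : M * Nat.card K ≤ Nat.card ↥Bgrp := by
      have := Nat.card_le_card_of_injective _ hBinj
      rwa [Nat.card_prod] at this
    -- conclusion
    have hAle : Nat.card ↥A ≤ m * M := by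
      rw [hA1]
      exact Nat.mul_le_mul hrangele hkerle
    calc m * Nat.card ↥A ≤ m * (m * M) := Nat.mul_le_mul_left m hAle
      _ = M * (m ^ 2) := by ring
      _ ≤ Nat.card ↥Bgrp := by rw [← hKm]; exact hBbig
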